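/- Define the desingularized values \zeta_r^{des}(-k_1,\dots,-k_r) for k_i \in \mathbb{N}_0 by \zeta_r^{des}(-k_1,\dots,-k_r) = (-1)^{k_1+\cdots+k_r} \sum \prod_{i=1}^r \frac{k_i!}{\prod_{j=i}^r \nu_{ij}!} B_{\nu_{ii}+\cdots+\nu_{ir}+1}, where the sum is over nonnegative integers \nu_{ij} (1 \le i \le j \le r) with \nu_{1i}+\cdots+\nu_{ii} = k_i for each i, and B_m are Bernoulli numbers. Then the generating function \sum_{k_1,\dots,k_r \ge 0} \frac{(-t_1)^{k_1}\cdots(-t_r)^{k_r}}{k_1!\cdots k_r!} \zeta_r^{des}(-k_1,\dots,-k_r) equals \prod_{i=1}^r \frac{(1-t_i-\cdots-t_r)e^{t_i+\cdots+t_r}-1}{(e^{t_i+\cdots+t_r}-1)^2} in \mathbb{Q}[[t_1,\dots,t_r]]. -/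

import Mathlib

/-- The multivariate power series `f(∑_{j ∈ S} t_j)` obtained by substituting the
sum of the variables indexed by `S` into the one-variable power series `f`. -/
noncomputable def substSum {r : ℕ} (f : PowerSeries ℚ) (S : Finset (Fin r)) :
    MvPowerSeries (Fin r) ℚ :=
  fun d => if d.support ⊆ S then
    (d.multinomial : ℚ) * PowerSeries.coeff (d.sum fun _ n => n) f else 0

/-- `Zgen r f = ∏_{i=1}^r f(t_i + ⋯ + t_r)` as a formal power series in `t_1, …, t_r`. -/
noncomputable def Zgen (r : ℕ) (f : PowerSeries ℚ) : MvPowerSeries (Fin r) ℚ :=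
  ∏ i : Fin r, substSum f (Finset.Ici i)

/-- View a power series in the variables `t_2, …, t_{r+1}` (i.e. in `r` variables)
as a power series in `t_1, …, t_{r+1}` not involving the first variable. -/
noncomputable def shiftVar {r : ℕ} (f : MvPowerSeries (Fin r) ℚ) :
    MvPowerSeries (Fin (r + 1)) ℚ :=
  fun d => if d 0 = 0 then
    f (Finsupp.comapDomain Fin.succ d (Fin.succ_injective r).injOn) else 0

/-- The desingularized value `ζ_r^{des}(-k_1, …, -k_r)`: namely `k_1! ⋯ k_r!` times
the coefficient of `(-t_1)^{k_1} ⋯ (-t_r)^{k_r}` in `Zgen r f`. -/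
noncomputable def zetaDes (r : ℕ) (f : PowerSeries ℚ) (k : Fin r → ℕ) : ℚ :=
  (∏ i, ((-1 : ℚ) ^ (k i) * (k i).factorial)) *
    MvPowerSeries.coeff (Finsupp.equivFunOnFinite.symm k) (Zgen r f)

/-- The explicit Bernoulli-number formula for the desingularized values:
`ζ_r^{des}(-k_1,…,-k_r) = (-1)^{k_1+⋯+k_r} ∑_ν ∏_{i=1}^r (k_i!/∏_{j=i}^r ν_{ij}!)
B_{ν_{ii}+⋯+ν_{ir}+1}`, the sum being over nonnegative integers `ν_{ij}`
(`1 ≤ i ≤ j ≤ r`) with `ν_{1i}+⋯+ν_{ii} = k_i` for each `i`.  Here `ν j i`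
denotes `ν_{ij}` (the `j`-th column is `ν j`). -/
noncomputable def zetaBernoulli (r : ℕ) (k : Fin r → ℕ) : ℚ :=
  (-1 : ℚ) ^ (∑ i, k i) *
    ∑ ν ∈ Finset.filter (fun ν : Fin r → Fin r → ℕ => ∀ j i : Fin r, (j : ℕ) < (i : ℕ) → ν j i = 0)
        (Fintype.piFinset fun j : Fin r => Finset.Nat.antidiagonalTuple r (k j)),
      ∏ i : Fin r,
        (((k i).factorial : ℚ) / ∏ j ∈ Finset.Ici i, ((ν j i).factorial : ℚ)) *
          bernoulli ((∑ j ∈ Finset.Ici i, ν j i) + 1)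

section AuxLemmas

open PowerSeries

lemma derivative_exp_eq : (d⁄dX ℚ) (exp ℚ) = exp ℚ := by
  ext n
  rw [coeff_derivative, coeff_exp, coeff_exp]
  have h : ((n.factorial : ℚ)) ≠ 0 := Nat.cast_ne_zero.mpr n.factorial_ne_zero
  simp only [eq_ratCast, Rat.cast_id, Nat.factorial_succ]
  push_cast
  field_simp

lemma coeff_F (F : PowerSeries ℚ)
    (hF : (PowerSeries.exp ℚ - 1) ^ 2 * F =
      (1 - PowerSeries.X) * PowerSeries.exp ℚ - 1) (n : ℕ) :
    PowerSeries.coeff n F = bernoulli (n + 1) / n.factorial := by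
  set B := bernoulliPowerSeries ℚ with hBdef
  set G := (d⁄dX ℚ) B with hGdef
  have hB : B * (exp ℚ - 1) = X := bernoulliPowerSeries_mul_exp_sub_one ℚ
  have hD : (d⁄dX ℚ) (exp ℚ - 1) = exp ℚ := by
    rw [map_sub, derivative_exp_eq, Derivation.map_one_eq_zero, sub_zero]
  have h1 : B * exp ℚ + (exp ℚ - 1) * G = 1 := by
    have := congrArg (d⁄dX ℚ) hB
    rw [Derivation.leibniz, derivative_X, hD, smul_eq_mul, smul_eq_mul] at this
    linear_combination this
  have h2 : (exp ℚ - 1) ^ 2 * G = (1 - X) * exp ℚ - 1 := by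
    have := congrArg (· * (exp ℚ - 1)) h1
    simp only [add_mul, one_mul] at this
    calc (exp ℚ - 1) ^ 2 * G = (exp ℚ - 1) - (B * (exp ℚ - 1)) * exp ℚ := by
          linear_combination this
      _ = (1 - X) * exp ℚ - 1 := by rw [hB]; ring
  have hne : (exp ℚ - 1 : PowerSeries ℚ) ≠ 0 := by
    intro h
    have := congrArg (coeff 1) h
    simp [coeff_exp] at this
  have hFG : F = G := mul_left_cancel₀ (pow_ne_zero 2 hne) (hF.trans h2.symm)
  rw [hFG, hGdef, coeff_derivative, hBdef, bernoulliPowerSeries, coeff_mk]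
  have h1' : ((n.factorial : ℚ)) ≠ 0 := Nat.cast_ne_zero.mpr n.factorial_ne_zero
  simp only [eq_ratCast, Rat.cast_id, Nat.factorial_succ]
  push_cast
  field_simp

end AuxLemmas

lemma coeff_substSum {r : ℕ} (f : PowerSeries ℚ) (S : Finset (Fin r)) (e : Fin r →₀ ℕ) :
    MvPowerSeries.coeff e (substSum f S) =
      if e.support ⊆ S then
        (e.multinomial : ℚ) * PowerSeries.coeff (e.sum fun _ n => n) f else 0 := by
  rw [MvPowerSeries.coeff_apply]; rfl

lemma key_term {r : ℕ} (e : Fin r →₀ ℕ) (s : Finset (Fin r)) (hs : e.support ⊆ s) :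
    (e.multinomial : ℚ) * (bernoulli ((e.sum fun _ n => n) + 1) / (e.sum fun _ n => n).factorial)
      = (1 / ∏ j ∈ s, ((e j).factorial : ℚ)) * bernoulli ((∑ j ∈ s, e j) + 1) := by
  have hsum : (e.sum fun _ n => n) = ∑ j ∈ s, e j := by
    rw [Finsupp.sum]
    exact Finset.sum_subset hs (fun j _ hj => Finsupp.notMem_support_iff.mp hj)
  have hprod : (∏ j ∈ e.support, (e j).factorial) = ∏ j ∈ s, (e j).factorial := by
    refine Finset.prod_subset hs (fun j _ hj => ?_)
    rw [Finsupp.notMem_support_iff.mp hj]; rfl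
  have hspec := Nat.multinomial_spec e.support e
  have hnat : (∏ j ∈ s, (e j).factorial) * e.multinomial = (e.sum fun _ n => n).factorial := by
    rw [← hprod, Finsupp.multinomial_eq, hspec, hsum]
    rw [← hsum, Finsupp.sum]
  have hQ : (∏ j ∈ s, ((e j).factorial : ℚ)) * (e.multinomial : ℚ)
      = ((e.sum fun _ n => n).factorial : ℚ) := by
    push_cast [← hnat]
    ring
  have hP : (∏ j ∈ s, ((e j).factorial : ℚ)) ≠ 0 :=
    Finset.prod_ne_zero_iff.mpr fun j _ => Nat.cast_ne_zero.mpr (Nat.factorial_ne_zero _)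
  have hf : (((e.sum fun _ n => n).factorial : ℚ)) ≠ 0 :=
    Nat.cast_ne_zero.mpr (Nat.factorial_ne_zero _)
  rw [hsum] at hf hQ ⊢
  field_simp
  linear_combination bernoulli (∑ j ∈ s, e j + 1) * hQ

lemma factor_eq (k : ℕ) (P B : ℚ) (hk : ((k.factorial : ℚ)) ≠ 0) :
    ((-1 : ℚ) ^ k / k.factorial) * ((-1 : ℚ) ^ k * ((k.factorial / P) * B)) = (1 / P) * B := by
  have h2 : (-1 : ℚ) ^ k * (-1) ^ k = 1 := by
    rw [← pow_add]; exact Even.neg_one_pow ⟨k, rfl⟩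
  calc ((-1 : ℚ) ^ k / k.factorial) * ((-1 : ℚ) ^ k * ((k.factorial / P) * B))
      = ((-1 : ℚ) ^ k * (-1) ^ k) * (((k.factorial : ℚ)) / k.factorial) * ((1 / P) * B) := by ring
    _ = (1 / P) * B := by rw [h2, div_self hk, one_mul, one_mul]

/-- The generating function `∑_{k} ((-t_1)^{k_1}⋯(-t_r)^{k_r})/(k_1!⋯k_r!)
ζ_r^{des}(-k_1,…,-k_r)` of the Bernoulli-number values equals
`∏_{i=1}^r ((1-t_i-⋯-t_r)e^{t_i+⋯+t_r}-1)/((e^{t_i+⋯+t_r}-1)^2)`, stated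
coefficientwise in `ℚ[[t_1,…,t_r]]`. -/
theorem zetaBernoulli_generating_function (F : PowerSeries ℚ)
    (hF : (PowerSeries.exp ℚ - 1) ^ 2 * F =
      (1 - PowerSeries.X) * PowerSeries.exp ℚ - 1) (r : ℕ) (d : Fin r →₀ ℕ) :
    MvPowerSeries.coeff d (Zgen r F) =
      (∏ i, ((-1 : ℚ) ^ (d i) / ((d i).factorial : ℚ))) * zetaBernoulli r (fun i => d i) := by
  classical
  have hFc := coeff_F F hF
  have hzero : ∀ l ∈ Finset.finsuppAntidiag (Finset.univ : Finset (Fin r)) d,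
      (∏ i, MvPowerSeries.coeff (l i) (substSum F (Finset.Ici i))) ≠ 0 →
      ∀ i : Fin r, (l i).support ⊆ Finset.Ici i := by
    intro l _ hne i
    by_contra hns
    exact hne (Finset.prod_eq_zero (Finset.mem_univ i) (by rw [coeff_substSum, if_neg hns]))
  have LHS2 : ∑ l ∈ (Finset.finsuppAntidiag (Finset.univ : Finset (Fin r)) d).filter
        (fun l => ∀ i : Fin r, (l i).support ⊆ Finset.Ici i),
      ∏ i, MvPowerSeries.coeff (l i) (substSum F (Finset.Ici i))
    = ∑ l ∈ (Finset.finsuppAntidiag (Finset.univ : Finset (Fin r)) d).filter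
        (fun l => ∀ i : Fin r, (l i).support ⊆ Finset.Ici i),
      ∏ i, (1 / ∏ j ∈ Finset.Ici i, (((l i) j).factorial : ℚ)) *
        bernoulli ((∑ j ∈ Finset.Ici i, (l i) j) + 1) := by
    refine Finset.sum_congr rfl fun l hl => Finset.prod_congr rfl fun i _ => ?_
    rw [Finset.mem_filter] at hl
    rw [coeff_substSum, if_pos (hl.2 i), hFc]
    exact key_term (l i) _ (hl.2 i)
  have RHS2 : (∏ i, ((-1 : ℚ) ^ (d i) / ((d i).factorial : ℚ))) * zetaBernoulli r (fun i => d i)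
      = ∑ ν ∈ Finset.filter
            (fun ν : Fin r → Fin r → ℕ => ∀ j i : Fin r, (j : ℕ) < (i : ℕ) → ν j i = 0)
            (Fintype.piFinset fun j : Fin r => Finset.Nat.antidiagonalTuple r (d j)),
          ∏ i, (1 / ∏ j ∈ Finset.Ici i, ((ν j i).factorial : ℚ)) *
            bernoulli ((∑ j ∈ Finset.Ici i, ν j i) + 1) := by
    rw [zetaBernoulli, Finset.mul_sum, Finset.mul_sum]
    refine Finset.sum_congr rfl fun ν hν => ?_
    rw [← Finset.prod_pow_eq_pow_sum, ← Finset.prod_mul_distrib, ← Finset.prod_mul_distrib]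
    exact Finset.prod_congr rfl fun i _ =>
      factor_eq (d i) _ _ (Nat.cast_ne_zero.mpr (Nat.factorial_ne_zero _))
  rw [Zgen, MvPowerSeries.coeff_prod, ← Finset.sum_filter_of_ne hzero, LHS2, RHS2]
  refine Finset.sum_nbij' (fun l (j i : Fin r) => (l i) j)
    (fun ν => Finsupp.equivFunOnFinite.symm fun i => Finsupp.equivFunOnFinite.symm fun j => ν j i)
    ?_ ?_ ?_ ?_ ?_
  · intro l hl
    rw [Finset.mem_filter, Finset.mem_finsuppAntidiag] at hl
    obtain ⟨⟨hsum, -⟩, hsupp⟩ := hl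
    rw [Finset.mem_filter]
    constructor
    · rw [Fintype.mem_piFinset]
      intro j
      rw [Finset.Nat.mem_antidiagonalTuple]
      have := congrArg (fun g : Fin r →₀ ℕ => g j) hsum
      simpa [Finsupp.finset_sum_apply] using this
    · intro j i hji
      by_contra h0
      have hj : j ∈ (l i).support := Finsupp.mem_support_iff.mpr h0
      have hij := Finset.mem_Ici.mp (hsupp i hj)
      exact absurd hji (not_lt.mpr hij)
  · intro ν hν
    rw [Finset.mem_filter, Fintype.mem_piFinset] at hν
    obtain ⟨hν1, hν2⟩ := hν
    rw [Finset.mem_filter, Finset.mem_finsuppAntidiag]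
    refine ⟨⟨?_, fun x _ => Finset.mem_univ x⟩, ?_⟩
    · ext j
      rw [Finsupp.finset_sum_apply]
      simp only [Finsupp.coe_equivFunOnFinite_symm]
      exact Finset.Nat.mem_antidiagonalTuple.mp (hν1 j)
    · intro i j hj
      simp only [Finsupp.mem_support_iff, Finsupp.coe_equivFunOnFinite_symm] at hj
      rw [Finset.mem_Ici]
      by_contra hij
      exact hj (hν2 j i (not_le.mp hij))
  · intro l _
    ext i j
    simp [Finsupp.coe_equivFunOnFinite_symm]
  · intro ν _
    funext j i
    simp [Finsupp.coe_equivFunOnFinite_symm]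
  · intro l _
    rfl
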